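/- For all t ∈ (0,1), the principal value integral p.v.∫₀¹ 1/((t−s)√(s(1−s))) ds = 0. -/

import Mathlib

open Real MeasureTheory Filter Set

/-- `pvIntegral f t L` means `p.v. ∫₀¹ f(s)/(t-s) ds = L`. -/
def pvIntegral (f : ℝ → ℝ) (t L : ℝ) : Prop :=
  Tendsto (fun ε : ℝ => ∫ s in Set.Ioo (0:ℝ) 1 \ Set.Ioo (t - ε) (t + ε), f s / (t - s))
    (nhdsWithin 0 (Set.Ioi 0)) (nhds L)

noncomputable def Gf (t s : ℝ) : ℝ :=
  t + s - 2*t*s + 2 * Real.sqrt (t*(1-t)) * Real.sqrt (s*(1-s))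

noncomputable def Ff (t s : ℝ) : ℝ :=
  (Real.log (Gf t s) - Real.log (t - s)) / Real.sqrt (t*(1-t))

lemma Gf_pos {t : ℝ} (ht0 : 0 < t) (ht1 : t < 1) {s : ℝ} (hs0 : 0 ≤ s) (hs1 : s ≤ 1) :
    0 < Gf t s := by
  have h1 : 0 < t + s - 2*t*s := by nlinarith [mul_nonneg hs0 (sub_nonneg.2 ht1.le)]
  have h2 : 0 ≤ 2 * Real.sqrt (t*(1-t)) * Real.sqrt (s*(1-s)) := by positivity
  unfold Gf; linarith

lemma Ff_deriv {t : ℝ} (ht0 : 0 < t) (ht1 : t < 1) {s : ℝ} (hs0 : 0 < s) (hs1 : s < 1)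
    (hst : s ≠ t) :
    HasDerivAt (Ff t) (1 / Real.sqrt (s*(1-s)) / (t - s)) s := by
  set c := Real.sqrt (t*(1-t)) with hc
  set φ := Real.sqrt (s*(1-s)) with hφ
  have hcpos : 0 < c := Real.sqrt_pos.2 (by nlinarith)
  have hφpos : 0 < φ := Real.sqrt_pos.2 (by nlinarith)
  have hc2 : c^2 = t*(1-t) := Real.sq_sqrt (by nlinarith)
  have hφ2 : φ^2 = s*(1-s) := Real.sq_sqrt (by nlinarith)
  have hGpos : 0 < Gf t s := Gf_pos ht0 ht1 hs0.le hs1.le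
  have hts : t - s ≠ 0 := sub_ne_zero.2 (Ne.symm hst)
  have hu : HasDerivAt (fun s : ℝ => s*(1-s)) (1 - 2*s) s := by
    have h := (hasDerivAt_id s).mul ((hasDerivAt_const s (1:ℝ)).sub (hasDerivAt_id s))
    simp only [id_eq] at h
    exact h.congr_deriv (by simp only [Pi.sub_apply, id_eq]; ring)
  have hsq : HasDerivAt (fun s : ℝ => Real.sqrt (s*(1-s))) ((1-2*s) / (2*φ)) s :=
    hu.sqrt (by nlinarith)
  have hG : HasDerivAt (Gf t) (1 - 2*t + 2*c*((1-2*s)/(2*φ))) s := by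
    unfold Gf
    have h1 : HasDerivAt (fun s : ℝ => t + s - 2*t*s) (1 - 2*t) s := by
      have h := ((hasDerivAt_const s t).add (hasDerivAt_id s)).sub
        ((hasDerivAt_const s (2*t)).mul (hasDerivAt_id s))
      simp only [id_eq] at h
      exact h.congr_deriv (by ring)
    have h2 := hsq.const_mul (2*c)
    exact h1.add h2
  have hlogG : HasDerivAt (fun s => Real.log (Gf t s))
      ((1 - 2*t + 2*c*((1-2*s)/(2*φ))) / Gf t s) s := hG.log hGpos.ne'
  have hlogts : HasDerivAt (fun s => Real.log (t - s)) (-1 / (t - s)) s := by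
    have h : HasDerivAt (fun s : ℝ => t - s) (-1) s := by
      simpa using (hasDerivAt_id s).const_sub t
    simpa using h.log hts
  have hF : HasDerivAt (Ff t)
      (((1 - 2*t + 2*c*((1-2*s)/(2*φ))) / Gf t s - (-1 / (t - s))) / c) s := by
    unfold Ff
    exact (hlogG.sub hlogts).div_const c
  convert hF using 1
  have hGne : Gf t s ≠ 0 := hGpos.ne'
  have hGdef : Gf t s = t + s - 2*t*s + 2*c*φ := rfl
  rw [hGdef] at hGne ⊢
  have hGne' : t + s - t * s * 2 + φ * 2 * c ≠ 0 := by convert hGne using 1; ring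
  field_simp
  linear_combination (-2*c) * hφ2 + (2*φ) * hc2

lemma Gf_continuous (t : ℝ) : Continuous (Gf t) := by
  unfold Gf; fun_prop

lemma Ff_contOn {t : ℝ} (ht0 : 0 < t) (ht1 : t < 1) {A : Set ℝ}
    (hA : ∀ s ∈ A, 0 ≤ s ∧ s ≤ 1 ∧ s ≠ t) : ContinuousOn (Ff t) A := by
  apply ContinuousOn.div_const
  apply ContinuousOn.sub
  · intro s hs
    obtain ⟨h0, h1, hst⟩ := hA s hs
    exact ((Real.continuousAt_log (Gf_pos ht0 ht1 h0 h1).ne').comp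
      ((Gf_continuous t).continuousAt)).continuousWithinAt
  · intro s hs
    obtain ⟨h0, h1, hst⟩ := hA s hs
    exact ((Real.continuousAt_log (sub_ne_zero.2 (Ne.symm hst))).comp
      (by fun_prop : Continuous fun s : ℝ => t - s).continuousAt).continuousWithinAt

lemma Ff_zero {t : ℝ} (ht0 : 0 < t) : Ff t 0 = 0 := by
  unfold Ff Gf
  simp

lemma Ff_one {t : ℝ} (ht1 : t < 1) : Ff t 1 = 0 := by
  unfold Ff Gf
  have h1 : Real.sqrt (1*(1-1)) = 0 := by norm_num
  rw [h1]
  have h2 : Real.log (t - 1) = Real.log (1 - t) := by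
    rw [show t - 1 = -(1 - t) by ring, Real.log_neg_eq_log]
  rw [h2]
  ring_nf

-- integrand
noncomputable def fInt (t s : ℝ) : ℝ := 1 / Real.sqrt (s*(1-s)) / (t - s)

lemma integrableOn_left {t : ℝ} (ht0 : 0 < t) (ht1 : t < 1) {ε : ℝ} (hε : 0 < ε)
    (hεt : ε < t) : IntegrableOn (fInt t) (Ioc 0 (t - ε)) := by
  have hmeas : MeasurableSet (Ioc (0:ℝ) (t-ε)) := measurableSet_Ioc
  have hcont : ContinuousOn (fInt t) (Ioc 0 (t-ε)) := by
    intro s hs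
    obtain ⟨hs0, hs1⟩ := hs
    have hφ : Real.sqrt (s*(1-s)) ≠ 0 := by
      refine (Real.sqrt_pos.2 ?_).ne'
      nlinarith
    have hts : t - s ≠ 0 := by
      have : s < t := lt_of_le_of_lt hs1 (by linarith)
      exact sub_ne_zero.2 (by linarith)
    apply ContinuousWithinAt.div
    · exact (ContinuousWithinAt.div continuousWithinAt_const
        ((Real.continuous_sqrt.comp (by fun_prop)).continuousWithinAt) hφ)
    · exact (continuous_const.sub continuous_id).continuousWithinAt
    · exact hts
  set C : ℝ := 1 / (ε * Real.sqrt (1 - t)) with hC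
  have hbound : ∀ s ∈ Ioc (0:ℝ) (t-ε), ‖fInt t s‖ ≤ C * s ^ (-(1/2) : ℝ) := by
    intro s hs
    obtain ⟨hs0, hs1⟩ := hs
    have hst : s < t := lt_of_le_of_lt hs1 (by linarith)
    have h1s : 1 - t < 1 - s := by linarith
    have h1t : 0 < 1 - t := by linarith
    have hsqrtpos : 0 < Real.sqrt (s*(1-s)) := Real.sqrt_pos.2 (by nlinarith)
    have htspos : ε ≤ t - s := by linarith
    have hts' : (0:ℝ) < t - s := by linarith
    have hfeq : ‖fInt t s‖ = 1 / (Real.sqrt (s*(1-s)) * (t-s)) := by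
      unfold fInt
      rw [div_div, Real.norm_eq_abs,
        abs_of_pos (one_div_pos.2 (mul_pos hsqrtpos hts'))]
    rw [hfeq]
    have hrpow : s ^ (-(1/2) : ℝ) = 1 / Real.sqrt s := by
      rw [Real.rpow_neg hs0.le, Real.sqrt_eq_rpow]; norm_num
    rw [hrpow, hC]
    rw [div_mul_div_comm, one_mul]
    apply one_div_le_one_div_of_le
    · positivity
    · rw [Real.sqrt_mul hs0.le]
      have h1 : Real.sqrt (1 - t) ≤ Real.sqrt (1 - s) := Real.sqrt_le_sqrt h1s.le
      calc ε * Real.sqrt (1-t) * Real.sqrt s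
          ≤ (t - s) * Real.sqrt (1-s) * Real.sqrt s := by
            apply mul_le_mul_of_nonneg_right _ (Real.sqrt_nonneg s)
            apply mul_le_mul htspos h1 (Real.sqrt_nonneg _) (by linarith)
        _ = Real.sqrt s * Real.sqrt (1-s) * (t - s) := by ring
  have hg : IntegrableOn (fun s : ℝ => C * s ^ (-(1/2) : ℝ)) (Ioc 0 (t-ε)) := by
    have := intervalIntegral.intervalIntegrable_rpow' (a := 0) (b := t-ε)
      (r := -(1/2)) (by norm_num)
    rw [intervalIntegrable_iff_integrableOn_Ioc_of_le (by linarith)] at this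
    exact this.const_mul C
  apply Integrable.mono' hg (hcont.aestronglyMeasurable hmeas)
  rw [ae_restrict_iff' hmeas]
  exact ae_of_all _ hbound

lemma integrableOn_right {t : ℝ} (ht0 : 0 < t) (ht1 : t < 1) {ε : ℝ} (hε : 0 < ε)
    (hεt : ε < 1 - t) : IntegrableOn (fInt t) (Ico (t + ε) 1) := by
  have hmeas : MeasurableSet (Ico (t+ε) (1:ℝ)) := measurableSet_Ico
  have hcont : ContinuousOn (fInt t) (Ico (t+ε) 1) := by
    intro s hs
    obtain ⟨hs0, hs1⟩ := hs
    have hst : t < s := by linarith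
    have hφ : Real.sqrt (s*(1-s)) ≠ 0 := by
      refine (Real.sqrt_pos.2 ?_).ne'
      nlinarith
    have hts : t - s ≠ 0 := sub_ne_zero.2 (by linarith)
    apply ContinuousWithinAt.div
    · exact (ContinuousWithinAt.div continuousWithinAt_const
        ((Real.continuous_sqrt.comp (by fun_prop)).continuousWithinAt) hφ)
    · exact (continuous_const.sub continuous_id).continuousWithinAt
    · exact hts
  set C : ℝ := 1 / (ε * Real.sqrt t) with hC
  have hbound : ∀ s ∈ Ico (t+ε) (1:ℝ), ‖fInt t s‖ ≤ C * (1-s) ^ (-(1/2) : ℝ) := by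
    intro s hs
    obtain ⟨hs0, hs1⟩ := hs
    have hst : t < s := by linarith
    have hs0' : 0 < s := lt_trans ht0 hst
    have h1s : 0 < 1 - s := by linarith
    have hsqrtpos : 0 < Real.sqrt (s*(1-s)) := Real.sqrt_pos.2 (by nlinarith)
    have htspos : ε ≤ s - t := by linarith
    have hfeq : ‖fInt t s‖ = 1 / (Real.sqrt (s*(1-s)) * (s-t)) := by
      unfold fInt
      rw [div_div, Real.norm_eq_abs, abs_div, abs_one,
        abs_of_neg (by nlinarith : Real.sqrt (s*(1-s)) * (t - s) < 0)]
      ring_nf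
    rw [hfeq]
    have hrpow : (1-s) ^ (-(1/2) : ℝ) = 1 / Real.sqrt (1-s) := by
      rw [Real.rpow_neg h1s.le, Real.sqrt_eq_rpow]; norm_num
    rw [hrpow, hC, div_mul_div_comm, one_mul]
    apply one_div_le_one_div_of_le
    · positivity
    · rw [Real.sqrt_mul hs0'.le]
      have h1 : Real.sqrt t ≤ Real.sqrt s := Real.sqrt_le_sqrt hst.le
      calc ε * Real.sqrt t * Real.sqrt (1-s)
          ≤ (s - t) * Real.sqrt s * Real.sqrt (1-s) := by
            apply mul_le_mul_of_nonneg_right _ (Real.sqrt_nonneg _)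
            apply mul_le_mul htspos h1 (Real.sqrt_nonneg _) (by linarith)
        _ = Real.sqrt s * Real.sqrt (1-s) * (s - t) := by ring
  have hg : IntegrableOn (fun s : ℝ => C * (1-s) ^ (-(1/2) : ℝ)) (Ico (t+ε) 1) := by
    have h0 := intervalIntegral.intervalIntegrable_rpow' (a := 0) (b := 1-(t+ε))
      (r := -(1/2)) (by norm_num)
    have h1 := (h0.comp_sub_left 1).symm
    simp only [sub_zero, sub_sub_cancel] at h1
    rw [intervalIntegrable_iff_integrableOn_Ioc_of_le (by linarith)] at h1
    have h2 : IntegrableOn (fun x : ℝ => (1-x) ^ (-(1/2):ℝ)) (Ico (t+ε) 1) := by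
      unfold IntegrableOn
      rw [Measure.restrict_congr_set MeasureTheory.Ico_ae_eq_Ioc]
      exact h1
    exact h2.const_mul C
  apply Integrable.mono' hg (hcont.aestronglyMeasurable hmeas)
  rw [ae_restrict_iff' hmeas]
  exact ae_of_all _ hbound

lemma integral_left {t : ℝ} (ht0 : 0 < t) (ht1 : t < 1) {ε : ℝ} (hε : 0 < ε)
    (hεt : ε < t) :
    ∫ s in Ioc (0:ℝ) (t-ε), fInt t s = Ff t (t-ε) - Ff t 0 := by
  rw [← intervalIntegral.integral_of_le (by linarith : (0:ℝ) ≤ t - ε)]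
  apply intervalIntegral.integral_eq_sub_of_hasDeriv_right_of_le (by linarith)
  · apply Ff_contOn ht0 ht1
    rintro s ⟨h0, h1⟩
    exact ⟨h0, by linarith, by intro h; rw [h] at h1; linarith⟩
  · rintro x ⟨hx0, hx1⟩
    exact (Ff_deriv ht0 ht1 hx0 (by linarith) (by intro h; rw [h] at hx1; linarith)).hasDerivWithinAt
  · rw [intervalIntegrable_iff_integrableOn_Ioc_of_le (by linarith)]
    exact integrableOn_left ht0 ht1 hε hεt

lemma integral_right {t : ℝ} (ht0 : 0 < t) (ht1 : t < 1) {ε : ℝ} (hε : 0 < ε)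
    (hεt : ε < 1 - t) :
    ∫ s in Ico (t+ε) (1:ℝ), fInt t s = Ff t 1 - Ff t (t+ε) := by
  rw [show (∫ s in Ico (t+ε) (1:ℝ), fInt t s) = ∫ s in Ioc (t+ε) (1:ℝ), fInt t s from
    setIntegral_congr_set MeasureTheory.Ico_ae_eq_Ioc]
  rw [← intervalIntegral.integral_of_le (by linarith : t + ε ≤ 1)]
  apply intervalIntegral.integral_eq_sub_of_hasDeriv_right_of_le (by linarith)
  · apply Ff_contOn ht0 ht1
    rintro s ⟨h0, h1⟩
    exact ⟨by linarith, h1, by intro h; rw [h] at h0; linarith⟩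
  · rintro x ⟨hx0, hx1⟩
    exact (Ff_deriv ht0 ht1 (by linarith) hx1 (by intro h; rw [h] at hx0; linarith)).hasDerivWithinAt
  · rw [intervalIntegrable_iff_integrableOn_Ioc_of_le (by linarith)]
    unfold IntegrableOn
    rw [← Measure.restrict_congr_set MeasureTheory.Ico_ae_eq_Ioc]
    exact integrableOn_right ht0 ht1 hε hεt

theorem stmt14_aux :
    ∀ t ∈ Set.Ioo (0:ℝ) 1,
      Tendsto (fun ε : ℝ => ∫ s in Set.Ioo (0:ℝ) 1 \ Set.Ioo (t - ε) (t + ε),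
          (fun s => 1 / Real.sqrt (s * (1 - s))) s / (t - s))
        (nhdsWithin 0 (Set.Ioi 0)) (nhds 0) := by
  rintro t ⟨ht0, ht1⟩
  set c := Real.sqrt (t*(1-t)) with hc
  have hcpos : 0 < c := Real.sqrt_pos.2 (by nlinarith)
  set h : ℝ → ℝ := fun ε => (Real.log (Gf t (t-ε)) - Real.log (Gf t (t+ε))) / c with hh
  have hGt : 0 < Gf t t := Gf_pos ht0 ht1 ht0.le ht1.le
  have hcont : ContinuousAt h 0 := by
    apply ContinuousAt.div_const
    apply ContinuousAt.sub
    · exact (Real.continuousAt_log (by simpa using hGt.ne')).comp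
        (((Gf_continuous t).comp (continuous_const.sub continuous_id)).continuousAt)
    · exact (Real.continuousAt_log (by simpa using hGt.ne')).comp
        (((Gf_continuous t).comp (continuous_const.add continuous_id)).continuousAt)
  have h0 : h 0 = 0 := by simp [hh]
  have htend : Tendsto h (nhdsWithin 0 (Set.Ioi 0)) (nhds 0) := by
    have h1 := hcont.tendsto
    rw [h0] at h1
    exact h1.mono_left nhdsWithin_le_nhds
  apply htend.congr'
  have hδ : (0:ℝ) < min t (1-t) := lt_min ht0 (by linarith)
  filter_upwards [Ioo_mem_nhdsGT_of_mem (show (0:ℝ) ∈ Ico (0:ℝ) (min t (1-t)) from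
    ⟨le_refl _, hδ⟩)] with ε hε
  obtain ⟨hε0, hεδ⟩ := hε
  have hεt : ε < t := lt_of_lt_of_le hεδ (min_le_left _ _)
  have hεt' : ε < 1 - t := lt_of_lt_of_le hεδ (min_le_right _ _)
  have hset : Set.Ioo (0:ℝ) 1 \ Set.Ioo (t - ε) (t + ε)
      = Ioc 0 (t-ε) ∪ Ico (t+ε) 1 := by
    ext x
    simp only [Set.mem_diff, Set.mem_Ioo, Set.mem_union, Set.mem_Ioc, Set.mem_Ico, not_and,
      not_lt]
    constructor
    · rintro ⟨⟨hx0, hx1⟩, hx2⟩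
      rcases le_or_gt x (t - ε) with h | h
      · exact Or.inl ⟨hx0, h⟩
      · exact Or.inr ⟨hx2 h, hx1⟩
    · rintro (⟨hx0, hx1⟩ | ⟨hx0, hx1⟩)
      · exact ⟨⟨hx0, by linarith⟩, fun h => by linarith⟩
      · exact ⟨⟨by linarith, hx1⟩, fun h => by linarith⟩
  have hint : (∫ s in Set.Ioo (0:ℝ) 1 \ Set.Ioo (t - ε) (t + ε),
      (fun s => 1 / Real.sqrt (s * (1 - s))) s / (t - s)) = ∫ s in Ioc 0 (t-ε) ∪ Ico (t+ε) 1,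
      fInt t s := by rw [hset]; rfl
  rw [hint]
  rw [MeasureTheory.setIntegral_union (by
      rw [Set.disjoint_left]
      rintro x ⟨_, hx1⟩ ⟨hx2, _⟩
      linarith) measurableSet_Ico (integrableOn_left ht0 ht1 hε0 hεt)
      (integrableOn_right ht0 ht1 hε0 hεt')]
  rw [integral_left ht0 ht1 hε0 hεt, integral_right ht0 ht1 hε0 hεt', Ff_zero ht0, Ff_one ht1]
  unfold Ff
  rw [show t - (t - ε) = ε by ring, show t - (t + ε) = -ε by ring, Real.log_neg_eq_log]
  simp only [hh]
  ring


theorem stmt14 :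
    ∀ t ∈ Set.Ioo (0:ℝ) 1,
      pvIntegral (fun s => 1 / Real.sqrt (s * (1 - s))) t 0 := by
  intro t ht
  unfold pvIntegral
  exact stmt14_aux t ht
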